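/- Fix an integer k ≥ 2 and a positive integer N. The ideal J_k of ℂ[x_1,...,x_N] consisting of polynomials vanishing on every coordinate subspace x_{i_1} = ... = x_{i_{k+1}} = 0 (for all 1 ≤ i_1 < ... < i_{k+1} ≤ N, where 0 ≤ k ≤ N-1) is generated by the polynomials σ(x_1 · x_2 · ... · x_{N-k}) for σ ranging over the symmetric group S_N acting by permutation of variables. -/

import Mathlib

open Finset BigOperators MvPolynomial

/-- Any product of `X i` over a set of given cardinality is a renaming of the
product over any other set of the same cardinality. -/
lemma exists_rename_prod {N : ℕ} (A T : Finset (Fin N)) (h : A.card = T.card) :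
    ∃ σ : Equiv.Perm (Fin N),
      MvPolynomial.rename σ (∏ i ∈ A, (MvPolynomial.X i : MvPolynomial (Fin N) ℂ))
        = ∏ i ∈ T, MvPolynomial.X i := by
  classical
  have hc : Fintype.card {x // x ∈ A} = Fintype.card {x // x ∈ T} := by
    simpa [Fintype.card_coe] using h
  have hc' : Fintype.card {x // ¬ x ∈ A} = Fintype.card {x // ¬ x ∈ T} := by
    rw [Fintype.card_subtype_compl, Fintype.card_subtype_compl, hc]
  let e := Fintype.equivOfCardEq hc
  let f := Fintype.equivOfCardEq hc'
  let σ : Equiv.Perm (Fin N) := Equiv.subtypeCongr e f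
  have hσA : ∀ i ∈ A, σ i ∈ T := by
    intro i hi
    have : σ i = ↑(e ⟨i, hi⟩) := by simp [σ, Equiv.subtypeCongr, hi]
    rw [this]; exact (e ⟨i, hi⟩).2
  have himg : A.image σ = T := by
    apply Finset.eq_of_subset_of_card_le
    · intro j hj
      obtain ⟨i, hi, rfl⟩ := Finset.mem_image.mp hj
      exact hσA i hi
    · rw [Finset.card_image_of_injective _ σ.injective, ← h]
  refine ⟨σ, ?_⟩
  rw [map_prod]
  simp only [rename_X]
  rw [← himg, Finset.prod_image (fun a _ b _ hab => σ.injective hab)]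

theorem stmt_10 (N k : ℕ) (hN : 0 < N) (hk : 2 ≤ k) (hkN : k ≤ N - 1) :
    (Ideal.span {q : MvPolynomial (Fin N) ℂ | ∃ σ : Equiv.Perm (Fin N),
        q = MvPolynomial.rename σ
          (∏ i ∈ Finset.univ.filter (fun i : Fin N => (i : ℕ) < N - k),
            MvPolynomial.X i)} : Set (MvPolynomial (Fin N) ℂ))
    = {p : MvPolynomial (Fin N) ℂ |
        ∀ S : Finset (Fin N), S.card = k + 1 →
        ∀ x : Fin N → ℂ, (∀ i ∈ S, x i = 0) → MvPolynomial.eval x p = 0} := by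
  classical
  set m := N - k with hm
  have hkN' : k + 1 ≤ N := by omega
  have hmN : m ≤ N := Nat.sub_le _ _
  set A := Finset.univ.filter (fun i : Fin N => (i : ℕ) < N - k) with hA
  have hAcard : A.card = m := by
    have : A = Finset.map (Fin.castLEEmb hmN) Finset.univ := by
      ext i
      simp only [hA, Finset.mem_filter, Finset.mem_univ, true_and, Finset.mem_map,
        Fin.castLEEmb, Function.Embedding.coeFn_mk]
      constructor
      · intro hi
        exact ⟨⟨i, hi⟩, Fin.ext rfl⟩
      · rintro ⟨j, rfl⟩
        exact j.2
    rw [this, Finset.card_map, Finset.card_univ, Fintype.card_fin]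
  ext p
  simp only [SetLike.mem_coe, Set.mem_setOf_eq]
  constructor
  · -- easy direction: generators vanish
    intro hp S hS x hx
    refine Submodule.span_induction ?_ ?_ ?_ ?_ hp
    · rintro q ⟨σ, rfl⟩
      rw [eval_rename, map_prod]
      -- the image of A under σ meets S
      have hinter : ((A.image σ) ∩ S).Nonempty := by
        by_contra hempty
        rw [Finset.not_nonempty_iff_eq_empty, ← Finset.disjoint_iff_inter_eq_empty] at hempty
        have hcard := Finset.card_union_of_disjoint hempty
        have hle : ((A.image σ) ∪ S).card ≤ N := by
          simpa using Finset.card_le_univ ((A.image σ) ∪ S)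
        rw [Finset.card_image_of_injective _ σ.injective, hAcard, hS] at hcard
        omega
      obtain ⟨j, hj⟩ := hinter
      rw [Finset.mem_inter, Finset.mem_image] at hj
      obtain ⟨⟨i, hi, hσi⟩, hjS⟩ := hj
      apply Finset.prod_eq_zero hi
      simp only [Function.comp_apply, eval_X]
      rw [hσi]
      exact hx j hjS
    · simp
    · intro a b _ _ ha hb
      simp [ha, hb]
    · intro c a _ ha
      rw [smul_eq_mul, map_mul, ha, mul_zero]
  · -- hard direction
    intro hp
    have key : ∀ d ∈ p.support, m ≤ d.support.card := by
      intro d hd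
      by_contra hlt
      push_neg at hlt
      have hScard : k + 1 ≤ d.supportᶜ.card := by
        rw [Finset.card_compl, Fintype.card_fin]
        omega
      obtain ⟨S, hSsub, hS⟩ := Finset.exists_subset_card_eq hScard
      set f : Fin N → MvPolynomial (Fin N) ℂ :=
        fun i => if i ∈ S then 0 else MvPolynomial.X i with hf
      have hφ : MvPolynomial.eval₂ MvPolynomial.C f p = 0 := by
        apply MvPolynomial.funext
        intro x
        rw [← MvPolynomial.eval_assoc, map_zero]
        apply hp S hS
        intro i hi
        simp [hf, hi]
      have hcoeff : MvPolynomial.coeff d (MvPolynomial.eval₂ MvPolynomial.C f p)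
          = MvPolynomial.coeff d p := by
        conv_lhs => rw [p.as_sum]
        rw [MvPolynomial.eval₂_sum, MvPolynomial.coeff_sum]
        rw [Finset.sum_eq_single d]
        · -- term at d
          have hdisj : ∀ i ∈ d.support, f i = MvPolynomial.X i := by
            intro i hi
            have : i ∉ S := fun hiS => (Finset.mem_compl.mp (hSsub hiS)) hi
            simp [hf, this]
          rw [MvPolynomial.eval₂_monomial]
          rw [Finsupp.prod, Finset.prod_congr rfl (fun i hi => by rw [hdisj i hi])]
          rw [← Finsupp.prod, ← MvPolynomial.monomial_eq, MvPolynomial.coeff_monomial, if_pos rfl]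
        · intro v hv hvd
          by_cases hvS : ∃ j ∈ S, v j ≠ 0
          · obtain ⟨j, hjS, hjv⟩ := hvS
            rw [MvPolynomial.eval₂_monomial, Finsupp.prod]
            have hj : j ∈ v.support := Finsupp.mem_support_iff.mpr hjv
            rw [Finset.prod_eq_zero hj (by simp [hf, hjS, zero_pow hjv]), mul_zero,
              MvPolynomial.coeff_zero]
          · push_neg at hvS
            have hdisj : ∀ i ∈ v.support, f i = MvPolynomial.X i := by
              intro i hi
              have : i ∉ S := fun hiS => (Finsupp.mem_support_iff.mp hi) (hvS i hiS)
              simp [hf, this]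
            rw [MvPolynomial.eval₂_monomial, Finsupp.prod,
              Finset.prod_congr rfl (fun i hi => by rw [hdisj i hi]), ← Finsupp.prod,
              ← MvPolynomial.monomial_eq, MvPolynomial.coeff_monomial, if_neg hvd]
        · intro hd'
          exact absurd hd hd'
      rw [hφ, MvPolynomial.coeff_zero] at hcoeff
      exact (MvPolynomial.mem_support_iff.mp hd) hcoeff.symm
    -- now p is in the span
    have hps : p = ∑ v ∈ p.support, MvPolynomial.monomial v (MvPolynomial.coeff v p) := p.as_sum
    rw [hps]
    apply Ideal.sum_mem
    intro d hd
    obtain ⟨T, hTsub, hT⟩ := Finset.exists_subset_card_eq (key d hd)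
    obtain ⟨σ, hσ⟩ := exists_rename_prod A T (by rw [hAcard, hT])
    have hgen : (∏ i ∈ T, (MvPolynomial.X i : MvPolynomial (Fin N) ℂ)) ∈
        Ideal.span {q : MvPolynomial (Fin N) ℂ | ∃ σ : Equiv.Perm (Fin N),
          q = MvPolynomial.rename σ
            (∏ i ∈ Finset.univ.filter (fun i : Fin N => (i : ℕ) < N - k),
              MvPolynomial.X i)} :=
      Ideal.subset_span ⟨σ, hσ.symm⟩
    have hdvd : (∏ i ∈ T, (MvPolynomial.X i : MvPolynomial (Fin N) ℂ)) ∣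
        MvPolynomial.monomial d (MvPolynomial.coeff d p) := by
      rw [MvPolynomial.monomial_eq]
      apply Dvd.dvd.mul_left
      rw [Finsupp.prod]
      calc ∏ i ∈ T, (MvPolynomial.X i : MvPolynomial (Fin N) ℂ)
          ∣ ∏ i ∈ T, (MvPolynomial.X i) ^ d i :=
            Finset.prod_dvd_prod_of_dvd _ _ (fun i hi =>
              dvd_pow_self _ (Finsupp.mem_support_iff.mp (hTsub hi)))
        _ ∣ ∏ i ∈ d.support, (MvPolynomial.X i) ^ d i :=
            Finset.prod_dvd_prod_of_subset _ _ _ hTsub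
    obtain ⟨c, hc⟩ := hdvd
    rw [hc]
    exact Ideal.mul_mem_right _ _ hgen
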